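/- arXiv:1705.10065 — 3 statements merged into one kernel-verified Lean document; each statement's English description precedes it below -/
import Mathlib

section
/- For any base b ≥ 2, any letter x ∈ {1,...,b-1}, and any word u over {0,...,b-1}, the number of words in L_b occurring as scattered subwords of xx0u equals the number of words in L_b occurring as scattered subwords of x0u plus the number of words in L_b occurring as scattered subwords of xu. -/
/-- Number of distinct words in `L_b` (no leading zero, or empty) occurring as
scattered subwords (subsequences) of `u`. -/
def lbCount (u : List ℕ) : ℕ :=
  ((u.sublists.filter (fun v => v.head? ≠ some 0)).dedup).length

/-- `S_b(n)`: number of distinct words of `L_b` occurring as scattered subwords of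
the base-`b` expansion of `n` (most significant digit first, `rep_b(0) = ε`). -/
def Sb (b n : ℕ) : ℕ := lbCount ((Nat.digits b n).reverse)

/-- Summatory function `A_b(n) = ∑_{j<n} S_b(j)`. -/
def Asum (b n : ℕ) : ℕ := ∑ j ∈ Finset.range n, Sb b j

section Aux
open List Finset


def subF (u : List ℕ) : Finset (List ℕ) := u.sublists.toFinset

@[simp] lemma mem_subF {v u : List ℕ} : v ∈ subF u ↔ v <+ u := by simp [subF]

def Nset (u : List ℕ) : Finset (List ℕ) := (subF u).filter (fun w => w.head? ≠ some 0)
def Dset (x : ℕ) (u : List ℕ) : Finset (List ℕ) := (subF u).filter (fun w => ¬ (x :: w) <+ u)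

@[simp] lemma mem_Nset {w u : List ℕ} : w ∈ Nset u ↔ w <+ u ∧ w.head? ≠ some 0 := by simp [Nset]
@[simp] lemma mem_Dset {x : ℕ} {w u : List ℕ} : w ∈ Dset x u ↔ w <+ u ∧ ¬ (x :: w) <+ u := by simp [Dset]

-- Lemma 1
lemma Ncard_cons (x : ℕ) (hx0 : x ≠ 0) (v : List ℕ) :
    (Nset (x :: v)).card = (Nset v).card + (Dset x v).card := by
  classical
  have hpart := Finset.card_filter_add_card_filter_not
    (s := Nset (x :: v)) (p := fun w => w <+ v)
  have h1 : (Nset (x :: v)).filter (fun w => w <+ v) = Nset v := by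
    ext w
    simp only [Finset.mem_filter, mem_Nset]
    constructor
    · rintro ⟨⟨-, h2⟩, h3⟩; exact ⟨h3, h2⟩
    · rintro ⟨h1, h2⟩; exact ⟨⟨h1.trans (sublist_cons_self _ _), h2⟩, h1⟩
  have h2 : (Nset (x :: v)).filter (fun w => ¬ w <+ v) = (Dset x v).image (x :: ·) := by
    ext w
    simp only [Finset.mem_filter, mem_Nset, Finset.mem_image, mem_Dset]
    constructor
    · rintro ⟨⟨hw, -⟩, hnw⟩
      rcases sublist_cons_iff.mp hw with h | ⟨r, rfl, hr⟩
      · exact absurd h hnw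
      · exact ⟨r, ⟨hr, hnw⟩, rfl⟩
    · rintro ⟨r, ⟨hr, hnr⟩, rfl⟩
      exact ⟨⟨sublist_cons_iff.mpr (Or.inr ⟨r, rfl, hr⟩), by simpa using hx0⟩, hnr⟩
  rw [h1, h2, Finset.card_image_of_injective _ (List.cons_injective)] at hpart
  omega

-- Lemma 2
lemma Dcard_cons_x (x : ℕ) (v : List ℕ) :
    (Dset x (x :: v)).card = (Dset x v).card := by
  classical
  have h : Dset x (x :: v) = (Dset x v).image (x :: ·) := by
    ext w
    simp only [mem_Dset, Finset.mem_image, cons_sublist_cons]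
    constructor
    · rintro ⟨hw, hnw⟩
      rcases sublist_cons_iff.mp hw with h | ⟨r, rfl, hr⟩
      · exact absurd h hnw
      · exact ⟨r, ⟨hr, hnw⟩, rfl⟩
    · rintro ⟨r, ⟨hr, hnr⟩, rfl⟩
      exact ⟨sublist_cons_iff.mpr (Or.inr ⟨r, rfl, hr⟩), hnr⟩
  rw [h, Finset.card_image_of_injective _ (List.cons_injective)]

lemma dropWhile_head_ne (t : List ℕ) :
    (t.dropWhile (fun a => a == 0)).head? ≠ some 0 := by
  induction t with
  | nil => simp
  | cons a t ih =>
    by_cases h : a = 0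
    · subst h; simpa [List.dropWhile_cons] using ih
    · simp [List.dropWhile_cons, h]

lemma eq_replicate_append (t : List ℕ) :
    t = List.replicate (t.takeWhile (fun a => a == 0)).length 0
        ++ t.dropWhile (fun a => a == 0) := by
  conv_lhs => rw [← List.takeWhile_append_dropWhile (p := fun a => a == 0) (l := t)]
  congr 1
  rw [List.eq_replicate_iff]
  exact ⟨rfl, fun b hb => by simpa using List.mem_takeWhile_imp hb⟩

lemma dropWhile_replicate_append (k : ℕ) (w : List ℕ) (hw : w.head? ≠ some 0) :
    (List.replicate k 0 ++ w).dropWhile (fun a => a == 0) = w := by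
  induction k with
  | zero =>
    cases w with
    | nil => rfl
    | cons a w =>
      have : a ≠ 0 := by simpa using hw
      simp [List.dropWhile_cons, this]
  | succ k ih => simpa [List.replicate_succ, List.dropWhile_cons] using ih

-- the bijection: R ≃ Q
lemma R_card_eq (x : ℕ) (u : List ℕ) :
    ((subF u).filter (fun t => (x :: t) <+ u ∧ ¬ (x :: 0 :: t) <+ u)).card =
    ((subF u).filter (fun w => w.head? ≠ some 0 ∧ (x :: w) <+ u)).card := by
  classical
  -- auxiliary maximality fact
  have aux : ∀ (k₁ k₂ : ℕ) (w : List ℕ),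
      ¬ (x :: 0 :: (List.replicate k₁ 0 ++ w)) <+ u →
      (x :: (List.replicate k₂ 0 ++ w)) <+ u → k₂ ≤ k₁ := by
    intro k₁ k₂ w h1 h2
    by_contra hk
    push_neg at hk
    apply h1
    have hsub : (0 :: (List.replicate k₁ 0 ++ w)) <+ (List.replicate k₂ 0 ++ w) := by
      have : (List.replicate (k₁ + 1) 0 ++ w) <+ (List.replicate k₂ 0 ++ w) :=
        Sublist.append ((List.replicate_sublist_replicate 0).mpr hk) (Sublist.refl w)
      simpa [List.replicate_succ] using this
    exact (cons_sublist_cons.mpr hsub).trans h2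
  apply Finset.card_bij (fun t _ => t.dropWhile (fun a => a == 0))
  · intro t ht
    simp only [Finset.mem_filter, mem_subF] at ht ⊢
    obtain ⟨htu, hxt, -⟩ := ht
    refine ⟨(List.dropWhile_sublist _).trans htu, dropWhile_head_ne t, ?_⟩
    exact (cons_sublist_cons.mpr (List.dropWhile_sublist _)).trans hxt
  · intro t₁ ht₁ t₂ ht₂ heq
    simp only [Finset.mem_filter, mem_subF] at ht₁ ht₂
    obtain ⟨-, hxt₁, h0t₁⟩ := ht₁
    obtain ⟨-, hxt₂, h0t₂⟩ := ht₂
    have e₁ := eq_replicate_append t₁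
    have e₂ := eq_replicate_append t₂
    rw [heq] at e₁
    set w := t₂.dropWhile (fun a => a == 0) with hw
    set k₁ := (t₁.takeWhile (fun a => a == 0)).length
    set k₂ := (t₂.takeWhile (fun a => a == 0)).length
    have hle₁ : k₂ ≤ k₁ := aux k₁ k₂ w (by rw [← e₁]; exact h0t₁) (by rw [← e₂]; exact hxt₂)
    have hle₂ : k₁ ≤ k₂ := aux k₂ k₁ w (by rw [← e₂]; exact h0t₂) (by rw [← e₁]; exact hxt₁)
    have : k₁ = k₂ := le_antisymm hle₂ hle₁
    rw [e₁, e₂, this]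
  · intro w hw
    simp only [Finset.mem_filter, mem_subF] at hw
    obtain ⟨hwu, hhead, hxw⟩ := hw
    set P : ℕ → Prop := fun k => (x :: (List.replicate k 0 ++ w)) <+ u with hP
    have hP0 : P 0 := by simpa [hP] using hxw
    set k₀ := Nat.findGreatest P u.length with hk₀
    have hPk₀ : P k₀ := Nat.findGreatest_spec (Nat.zero_le _) hP0
    refine ⟨List.replicate k₀ 0 ++ w, ?_, dropWhile_replicate_append k₀ w hhead⟩
    simp only [Finset.mem_filter, mem_subF]
    refine ⟨(sublist_cons_self _ _).trans hPk₀, hPk₀, ?_⟩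
    intro hcon
    have hP1 : P (k₀ + 1) := by
      simpa [hP, List.replicate_succ] using hcon
    have hlen : k₀ + 1 ≤ u.length := by
      have := hP1.length_le
      simp at this
      omega
    exact Nat.findGreatest_is_greatest (Nat.lt_succ_self k₀) hlen hP1

-- Lemma 3
lemma Dcard_zero (x : ℕ) (hx0 : x ≠ 0) (u : List ℕ) :
    (Dset x (0 :: u)).card = (Nset u).card + (Dset x u).card := by
  classical
  have key : ∀ w : List ℕ, (x :: w) <+ 0 :: u ↔ (x :: w) <+ u := by
    intro w
    constructor
    · intro h
      rcases sublist_cons_iff.mp h with h | ⟨r, he, -⟩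
      · exact h
      · injection he with h1 _
        exact absurd h1 hx0
    · exact fun h => h.trans (sublist_cons_self _ _)
  set P1 := (subF u).filter (fun w => w.head? ≠ some 0 ∧ ¬ (x :: w) <+ u) with hP1
  set Q := (subF u).filter (fun w => w.head? ≠ some 0 ∧ (x :: w) <+ u) with hQ
  set R := (subF u).filter (fun t => (x :: t) <+ u ∧ ¬ (x :: 0 :: t) <+ u) with hR
  set T := (subF u).filter (fun t => ¬ (x :: 0 :: t) <+ u) with hT
  -- (a)
  have ha : (Dset x (0 :: u)).card = T.card + P1.card := by
    have hpart := Finset.card_filter_add_card_filter_not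
      (s := Dset x (0 :: u)) (p := fun w => w.head? = some 0)
    have h1 : (Dset x (0 :: u)).filter (fun w => w.head? = some 0) = T.image (0 :: ·) := by
      ext w
      simp only [Finset.mem_filter, mem_Dset, Finset.mem_image, hT, mem_subF]
      constructor
      · rintro ⟨⟨hw, hnw⟩, hh⟩
        obtain ⟨t, rfl⟩ : ∃ t, w = 0 :: t := by
          cases w with
          | nil => simp at hh
          | cons a t =>
            have : a = 0 := by simpa using hh
            exact ⟨t, by rw [this]⟩
        exact ⟨t, ⟨cons_sublist_cons.mp hw, fun h => hnw ((key _).mpr h)⟩, rfl⟩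
      · rintro ⟨t, ⟨ht, hnt⟩, rfl⟩
        exact ⟨⟨cons_sublist_cons.mpr ht, fun h => hnt ((key _).mp h)⟩, rfl⟩
    have h2 : (Dset x (0 :: u)).filter (fun w => ¬ w.head? = some 0) = P1 := by
      ext w
      simp only [Finset.mem_filter, mem_Dset, hP1, mem_subF]
      constructor
      · rintro ⟨⟨hw, hnw⟩, hh⟩
        rcases sublist_cons_iff.mp hw with h | ⟨r, rfl, -⟩
        · exact ⟨h, hh, fun h' => hnw ((key _).mpr h')⟩
        · simp at hh
      · rintro ⟨hw, hh, hnw⟩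
        exact ⟨⟨hw.trans (sublist_cons_self _ _), fun h => hnw ((key _).mp h)⟩, hh⟩
    rw [h1, h2, Finset.card_image_of_injective _ (List.cons_injective)] at hpart
    omega
  -- (b)
  have hb : T.card = R.card + (Dset x u).card := by
    have hpart := Finset.card_filter_add_card_filter_not
      (s := T) (p := fun t => (x :: t) <+ u)
    have h1 : T.filter (fun t => (x :: t) <+ u) = R := by
      ext t
      simp only [Finset.mem_filter, hT, hR, mem_subF]
      tauto
    have h2 : T.filter (fun t => ¬ (x :: t) <+ u) = Dset x u := by
      ext t
      simp only [Finset.mem_filter, hT, mem_Dset, mem_subF]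
      constructor
      · tauto
      · rintro ⟨ht, hnt⟩
        refine ⟨⟨ht, fun h => hnt ?_⟩, hnt⟩
        exact (cons_sublist_cons.mpr (sublist_cons_self _ _)).trans h
    rw [h1, h2] at hpart
    omega
  -- (c)
  have hc : (Nset u).card = Q.card + P1.card := by
    have hpart := Finset.card_filter_add_card_filter_not
      (s := Nset u) (p := fun w => (x :: w) <+ u)
    have h1 : (Nset u).filter (fun w => (x :: w) <+ u) = Q := by
      ext w; simp only [Finset.mem_filter, mem_Nset, hQ, mem_subF]; tauto
    have h2 : (Nset u).filter (fun w => ¬ (x :: w) <+ u) = P1 := by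
      ext w; simp only [Finset.mem_filter, mem_Nset, hP1, mem_subF]; tauto
    rw [h1, h2] at hpart
    omega
  have hd : R.card = Q.card := R_card_eq x u
  omega


lemma lbCount_eq (u : List ℕ) : lbCount u = (Nset u).card := by
  rw [lbCount, ← List.card_toFinset, List.toFinset_filter]
  congr 1
  ext w
  simp [Nset, subF]

end Aux

theorem stmt1 (b x : ℕ) (hb : 2 ≤ b) (hx : 1 ≤ x) (hxb : x < b)
    (u : List ℕ) (hu : ∀ d ∈ u, d < b) :
    lbCount (x :: x :: 0 :: u) =
      lbCount (x :: 0 :: u) + lbCount (x :: u) := by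
  have hx0 : x ≠ 0 := by omega
  rw [lbCount_eq, lbCount_eq, lbCount_eq]
  have h1 := Ncard_cons x hx0 (x :: 0 :: u)
  have h2 := Dcard_cons_x x (0 :: u)
  have h3 := Dcard_zero x hx0 u
  have h4 := Ncard_cons x hx0 u
  omega
end

section
/- For all b ≥ 2, all x ∈ {1,...,b-1}, all ℓ ≥ 1, and all r with 0 ≤ r < b^{ℓ-1}, one has S_b(x·b^ℓ + r) = S_b(x·b^{ℓ-1} + r) + S_b(r). -/
/-! ### Auxiliary counting machinery -/

/-- The finset of (scattered) subwords of `u`. -/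
def SubF (u : List ℕ) : Finset (List ℕ) := u.sublists.toFinset

lemma mem_SubF {v u : List ℕ} : v ∈ SubF u ↔ v.Sublist u := by
  simp [SubF, List.mem_sublists]

/-- Number of distinct subwords. -/
def Dc (u : List ℕ) : ℕ := (SubF u).card

/-- Number of distinct subwords with no leading zero. -/
def Cc (u : List ℕ) : ℕ := ((SubF u).filter (fun v => v.head? ≠ some 0)).card

/-- Number of distinct subwords starting with `x`. -/
def Hc (x : ℕ) (u : List ℕ) : ℕ := ((SubF u).filter (fun v => v.head? = some x)).card

lemma Cc_cons_zero (u : List ℕ) : Cc (0 :: u) = Cc u := by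
  unfold Cc
  congr 1
  ext v
  simp only [Finset.mem_filter, mem_SubF, List.sublist_cons_iff]
  constructor
  · rintro ⟨h1 | ⟨w, rfl, hw⟩, h2⟩
    · exact ⟨h1, h2⟩
    · simp at h2
  · rintro ⟨h1, h2⟩; exact ⟨Or.inl h1, h2⟩

lemma Hc_cons_zero {x : ℕ} (hx : x ≠ 0) (u : List ℕ) : Hc x (0 :: u) = Hc x u := by
  unfold Hc
  congr 1
  ext v
  simp only [Finset.mem_filter, mem_SubF, List.sublist_cons_iff]
  constructor
  · rintro ⟨h1 | ⟨w, rfl, hw⟩, h2⟩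
    · exact ⟨h1, h2⟩
    · simp only [List.head?_cons, Option.some.injEq] at h2
      exact absurd h2.symm hx
  · rintro ⟨h1, h2⟩; exact ⟨Or.inl h1, h2⟩

lemma Cc_le_Dc (u : List ℕ) : Cc u ≤ Dc u := Finset.card_filter_le _ _

lemma Hc_add_Cc (u : List ℕ) : Hc 0 u + Cc u = Dc u := by
  unfold Hc Cc Dc
  exact Finset.card_filter_add_card_filter_not (fun v : List ℕ => v.head? = some 0)

lemma Dc_cons_zero (u : List ℕ) : Dc (0 :: u) = Dc u + Cc u := by
  have hset : SubF (0 :: u) = SubF u ∪ (SubF u).image (List.cons 0) := by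
    ext v
    simp only [Finset.mem_union, Finset.mem_image, mem_SubF, List.sublist_cons_iff]
    constructor
    · rintro (h | ⟨w, rfl, hw⟩)
      · exact Or.inl h
      · exact Or.inr ⟨w, hw, rfl⟩
    · rintro (h | ⟨w, hw, rfl⟩)
      · exact Or.inl h
      · exact Or.inr ⟨w, rfl, hw⟩
  have hinter : SubF u ∩ (SubF u).image (List.cons 0)
      = (SubF u).filter (fun v => v.head? = some 0) := by
    ext v
    simp only [Finset.mem_inter, Finset.mem_image, Finset.mem_filter, mem_SubF]
    constructor
    · rintro ⟨h1, w, hw, rfl⟩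
      exact ⟨h1, rfl⟩
    · rintro ⟨h1, h2⟩
      cases v with
      | nil => simp at h2
      | cons a w =>
        simp only [List.head?_cons, Option.some.injEq] at h2
        subst h2
        exact ⟨h1, w, (List.sublist_cons_self 0 w).trans h1, rfl⟩
  have hinj : Function.Injective (List.cons (0 : ℕ)) := fun a b h => by injection h
  have hcard := Finset.card_union_add_card_inter (SubF u) ((SubF u).image (List.cons 0))
  rw [← hset, hinter, Finset.card_image_of_injective _ hinj] at hcard
  have h1 := Hc_add_Cc u
  have h2 := Cc_le_Dc u
  unfold Dc Cc Hc at *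
  omega

lemma Cc_cons_nonzero {x : ℕ} (hx : x ≠ 0) (u : List ℕ) :
    Cc (x :: u) + Hc x u = Dc u + Cc u := by
  have hinj : Function.Injective (List.cons x) := fun a b h => by injection h
  have hset : (SubF (x :: u)).filter (fun v => v.head? ≠ some 0)
      = (SubF u).image (List.cons x) ∪ (SubF u).filter (fun v => v.head? ≠ some 0) := by
    ext v
    simp only [Finset.mem_union, Finset.mem_image, Finset.mem_filter, mem_SubF,
      List.sublist_cons_iff]
    constructor
    · rintro ⟨h1 | ⟨w, rfl, hw⟩, h2⟩
      · exact Or.inr ⟨h1, h2⟩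
      · exact Or.inl ⟨w, hw, rfl⟩
    · rintro (⟨w, hw, rfl⟩ | ⟨h1, h2⟩)
      · refine ⟨Or.inr ⟨w, rfl, hw⟩, ?_⟩
        simp only [List.head?_cons, ne_eq, Option.some.injEq]
        exact hx
      · exact ⟨Or.inl h1, h2⟩
  have hinter : (SubF u).image (List.cons x) ∩ (SubF u).filter (fun v => v.head? ≠ some 0)
      = (SubF u).filter (fun v => v.head? = some x) := by
    ext v
    simp only [Finset.mem_inter, Finset.mem_image, Finset.mem_filter, mem_SubF]
    constructor
    · rintro ⟨⟨w, hw, rfl⟩, h1, h2⟩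
      exact ⟨h1, rfl⟩
    · rintro ⟨h1, h2⟩
      cases v with
      | nil => simp at h2
      | cons a w =>
        simp only [List.head?_cons, Option.some.injEq] at h2
        subst h2
        refine ⟨⟨w, (List.sublist_cons_self _ w).trans h1, rfl⟩, h1, ?_⟩
        simp only [List.head?_cons, ne_eq, Option.some.injEq]
        exact hx
  have hcard := Finset.card_union_add_card_inter
    ((SubF u).image (List.cons x)) ((SubF u).filter (fun v => v.head? ≠ some 0))
  rw [← hset, hinter, Finset.card_image_of_injective _ hinj] at hcard
  unfold Dc Cc Hc at *
  omega

/-- The key recurrence: inserting an extra `0` after a nonzero first letter adds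
exactly `Cc v` new no-leading-zero subwords. -/
lemma Cc_key {x : ℕ} (hx : x ≠ 0) (v : List ℕ) :
    Cc (x :: 0 :: v) = Cc (x :: v) + Cc v := by
  have h1 := Cc_cons_nonzero hx (0 :: v)
  have h2 := Cc_cons_nonzero hx v
  rw [Hc_cons_zero hx, Dc_cons_zero, Cc_cons_zero] at h1
  omega

lemma Cc_replicate_zero (k : ℕ) (w : List ℕ) : Cc (List.replicate k 0 ++ w) = Cc w := by
  induction k with
  | zero => simp
  | succ n ih => rw [List.replicate_succ, List.cons_append, Cc_cons_zero, ih]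

lemma lbCount_eq_Cc (u : List ℕ) : lbCount u = Cc u := by
  rw [lbCount, ← List.card_toFinset, List.toFinset_filter, Cc, SubF]
  congr 1
  simp

/-! ### Digits decomposition -/

lemma ofDigits_replicate_zero (b k : ℕ) : Nat.ofDigits b (List.replicate k 0) = 0 := by
  induction k with
  | zero => simp [Nat.ofDigits]
  | succ n ih => rw [List.replicate_succ, Nat.ofDigits_cons, ih]; simp

lemma digits_len_le' {b r m : ℕ} (hb : 1 < b) (hr : r < b ^ m) :
    (Nat.digits b r).length ≤ m := by
  rcases Nat.eq_zero_or_pos r with rfl | hr0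
  · simp
  · rw [Nat.digits_len b r hb hr0.ne']
    have := (Nat.log_lt_iff_lt_pow hb hr0.ne').2 hr
    omega

lemma digits_decomp {b x m r : ℕ} (hb : 1 < b) (hx : x ≠ 0) (hxb : x < b)
    (hr : r < b ^ m) :
    Nat.digits b (x * b ^ m + r)
      = Nat.digits b r ++ List.replicate (m - (Nat.digits b r).length) 0 ++ [x] := by
  have hlen := digits_len_le' hb hr
  have hof : Nat.ofDigits b
      (Nat.digits b r ++ List.replicate (m - (Nat.digits b r).length) 0 ++ [x])
      = x * b ^ m + r := by
    rw [Nat.ofDigits_append, Nat.ofDigits_append, Nat.ofDigits_digits,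
      ofDigits_replicate_zero]
    simp only [Nat.ofDigits_singleton, List.length_append, List.length_replicate,
      List.length_nil, zero_add]
    have h2 : (Nat.digits b r).length + (m - (Nat.digits b r).length) = m := by omega
    rw [h2]
    ring
  have key := Nat.digits_ofDigits b hb
      (Nat.digits b r ++ List.replicate (m - (Nat.digits b r).length) 0 ++ [x])
    (by
      intro l hl
      simp only [List.mem_append, List.mem_replicate, List.mem_singleton] at hl
      rcases hl with (hl | hl) | hl
      · exact Nat.digits_lt_base hb hl
      · omega
      · omega)
    (by
      intro h
      rw [List.getLast_append]
      exact hx)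
  rw [hof] at key
  exact key

lemma Sb_decomp {b x m r : ℕ} (hb : 1 < b) (hx : x ≠ 0) (hxb : x < b)
    (hr : r < b ^ m) :
    Sb b (x * b ^ m + r)
      = Cc (x :: (List.replicate (m - (Nat.digits b r).length) 0
          ++ (Nat.digits b r).reverse)) := by
  rw [Sb, lbCount_eq_Cc, digits_decomp hb hx hxb hr]
  congr 1
  simp [List.reverse_append]

theorem stmt5 (b x ℓ r : ℕ) (hb : 2 ≤ b) (hx : 1 ≤ x) (hxb : x < b)
    (hℓ : 1 ≤ ℓ) (hr : r < b ^ (ℓ - 1)) :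
    Sb b (x * b ^ ℓ + r) = Sb b (x * b ^ (ℓ - 1) + r) + Sb b r := by
  have hb1 : 1 < b := hb
  have hx0 : x ≠ 0 := by omega
  have hlen : (Nat.digits b r).length ≤ ℓ - 1 := digits_len_le' hb1 hr
  have hrℓ : r < b ^ ℓ := lt_of_lt_of_le hr (Nat.pow_le_pow_right (by omega) (by omega))
  set w : List ℕ := (Nat.digits b r).reverse with hw
  set k : ℕ := ℓ - 1 - (Nat.digits b r).length with hk
  have h1 : Sb b (x * b ^ ℓ + r) = Cc (x :: 0 :: (List.replicate k 0 ++ w)) := by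
    rw [Sb_decomp hb1 hx0 hxb hrℓ]
    have : ℓ - (Nat.digits b r).length = k + 1 := by omega
    rw [this, List.replicate_succ]
    rfl
  have h2 : Sb b (x * b ^ (ℓ - 1) + r) = Cc (x :: (List.replicate k 0 ++ w)) := by
    rw [Sb_decomp hb1 hx0 hxb hr]
  have h3 : Sb b r = Cc w := by rw [Sb, lbCount_eq_Cc]
  rw [h1, h2, h3, Cc_key hx0, Cc_replicate_zero]
end

section
/- For every n ≥ 0: S_2(2n+1) = 3·S_2(n) − S_2(2n), S_2(4n) = −S_2(n) + 2·S_2(2n), and S_2(4n+2) = 4·S_2(n) − S_2(2n). -/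
/-! ### Auxiliary development -/

/-- The finset of valid subwords (empty or not starting with 0). -/
def Fset (u : List ℕ) : Finset (List ℕ) :=
  (u.sublists.filter (fun v => v.head? ≠ some 0)).toFinset

lemma mem_Fset {u v : List ℕ} : v ∈ Fset u ↔ v.Sublist u ∧ v.head? ≠ some 0 := by
  simp [Fset, List.mem_sublists]

lemma lbCount_eq_card (u : List ℕ) : lbCount u = (Fset u).card := by
  rw [lbCount, Fset, List.card_toFinset]

/-- Valid subwords ending with digit `d`. -/
def Eset (d : ℕ) (u : List ℕ) : Finset (List ℕ) :=
  (Fset u).filter (fun v => v.getLast? = some d)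

/-- Valid subwords `v` of `u` such that `v ++ [d]` is still valid. -/
def Gset (d : ℕ) (u : List ℕ) : Finset (List ℕ) :=
  (Fset u).filter (fun v => (v ++ [d]).head? ≠ some 0)

lemma nil_mem_Fset (u : List ℕ) : [] ∈ Fset u :=
  mem_Fset.mpr ⟨List.nil_sublist u, by simp⟩

lemma sublist_append_singleton_iff {w u : List ℕ} {d : ℕ} :
    w.Sublist (u ++ [d]) ↔ w.Sublist u ∨ ∃ v, w = v ++ [d] ∧ v.Sublist u := by
  constructor
  · intro h
    have h' : w.reverse.Sublist (d :: u.reverse) := by simpa using h.reverse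
    rcases List.sublist_cons_iff.mp h' with h2 | ⟨r, hr, hsub⟩
    · left; simpa using h2.reverse
    · right
      refine ⟨r.reverse, ?_, by simpa using hsub.reverse⟩
      have := congrArg List.reverse hr
      simpa using this
  · rintro (h | ⟨v, rfl, h⟩)
    · exact h.trans (List.sublist_append_left u [d])
    · exact h.append (List.Sublist.refl [d])

lemma head?_append_singleton (v : List ℕ) (d : ℕ) :
    (v ++ [d]).head? = if v = [] then some d else v.head? := by
  cases v <;> simp

lemma Fset_append (d : ℕ) (u : List ℕ) :
    Fset (u ++ [d]) = Fset u ∪ (Gset d u).image (· ++ [d]) := by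
  ext w
  simp only [Finset.mem_union, Finset.mem_image, Gset, Finset.mem_filter, mem_Fset]
  constructor
  · rintro ⟨hsub, hh⟩
    rcases sublist_append_singleton_iff.mp hsub with h | ⟨v, rfl, hv⟩
    · exact Or.inl ⟨h, hh⟩
    · refine Or.inr ⟨v, ⟨⟨hv, ?_⟩, hh⟩, rfl⟩
      rw [head?_append_singleton] at hh
      rcases eq_or_ne v [] with rfl | hne
      · simp
      · rw [if_neg hne] at hh; exact hh
  · rintro (⟨h, hh⟩ | ⟨v, ⟨⟨hv1, _⟩, hh⟩, rfl⟩)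
    · exact ⟨sublist_append_singleton_iff.mpr (Or.inl h), hh⟩
    · exact ⟨sublist_append_singleton_iff.mpr (Or.inr ⟨v, rfl, hv1⟩), hh⟩

lemma Eset_mem_decomp {d : ℕ} {u w : List ℕ} (hw : w ∈ Eset d u) :
    w.dropLast ∈ Gset d u ∧ w.dropLast ++ [d] = w := by
  obtain ⟨hwF, hlast⟩ := Finset.mem_filter.mp hw
  obtain ⟨hsub, hh⟩ := mem_Fset.mp hwF
  have hne : w ≠ [] := by rintro rfl; simp at hlast
  have hdec : w.dropLast ++ [d] = w := by
    have h1 := List.dropLast_append_getLast hne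
    have h2 : w.getLast hne = d := by
      have := List.getLast?_eq_getLast hne
      rw [hlast] at this; exact (Option.some_injective _ this.symm)
    rw [h2] at h1; exact h1
  refine ⟨Finset.mem_filter.mpr ⟨mem_Fset.mpr ⟨(List.dropLast_sublist w).trans hsub, ?_⟩, ?_⟩, hdec⟩
  · rcases eq_or_ne w.dropLast [] with h | h
    · simp [h]
    · have hh2 : w.head? = w.dropLast.head? := by
        conv_lhs => rw [← hdec]
        rw [head?_append_singleton, if_neg h]
      rw [← hh2]; exact hh
  · rw [hdec]; exact hh

lemma inter_eq_Eset (d : ℕ) (u : List ℕ) :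
    Fset u ∩ (Gset d u).image (· ++ [d]) = Eset d u := by
  ext w
  simp only [Finset.mem_inter, Finset.mem_image, Eset, Finset.mem_filter]
  constructor
  · rintro ⟨hF, v, hv, rfl⟩
    exact ⟨hF, by simp⟩
  · rintro ⟨hF, hlast⟩
    have h := Eset_mem_decomp (Finset.mem_filter.mpr ⟨hF, hlast⟩)
    exact ⟨hF, w.dropLast, h.1, h.2⟩

lemma Eset_append_self (d : ℕ) (u : List ℕ) :
    Eset d (u ++ [d]) = (Gset d u).image (· ++ [d]) := by
  ext w
  constructor
  · intro hw
    obtain ⟨hG, hdec⟩ := Eset_mem_decomp hw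
    obtain ⟨hvF, hvh⟩ := Finset.mem_filter.mp hG
    obtain ⟨_, hh⟩ := mem_Fset.mp hvF
    have hwsub : w.Sublist (u ++ [d]) := (mem_Fset.mp (Finset.mem_filter.mp hw).1).1
    have hsubU : w.dropLast.Sublist u := by
      rcases sublist_append_singleton_iff.mp hwsub with h2 | ⟨v, heq, hv⟩
      · exact (List.dropLast_sublist w).trans h2
      · have hdl : w.dropLast = v := by rw [heq]; simp
        rw [hdl]; exact hv
    exact Finset.mem_image.mpr
      ⟨w.dropLast, Finset.mem_filter.mpr ⟨mem_Fset.mpr ⟨hsubU, hh⟩, hvh⟩, hdec⟩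
  · intro hw
    obtain ⟨v, hv, rfl⟩ := Finset.mem_image.mp hw
    obtain ⟨hvF, hvh⟩ := Finset.mem_filter.mp hv
    refine Finset.mem_filter.mpr ⟨mem_Fset.mpr ⟨?_, by simpa using hvh⟩, by simp⟩
    exact sublist_append_singleton_iff.mpr (Or.inr ⟨v, rfl, (mem_Fset.mp hvF).1⟩)

lemma Eset_append_ne {e d : ℕ} (h : e ≠ d) (u : List ℕ) :
    Eset e (u ++ [d]) = Eset e u := by
  ext w
  simp only [Eset, Finset.mem_filter, mem_Fset, decide_eq_true_eq]
  constructor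
  · rintro ⟨⟨hsub, hh⟩, hlast⟩
    rcases sublist_append_singleton_iff.mp hsub with h2 | ⟨v, rfl, hv⟩
    · exact ⟨⟨h2, hh⟩, hlast⟩
    · exfalso
      rw [List.getLast?_concat] at hlast
      exact h (Option.some_injective _ hlast).symm
  · rintro ⟨⟨hsub, hh⟩, hlast⟩
    exact ⟨⟨sublist_append_singleton_iff.mpr (Or.inl hsub), hh⟩, hlast⟩

lemma card_Fset_append (d : ℕ) (u : List ℕ) :
    (Fset (u ++ [d])).card + (Eset d u).card = (Fset u).card + (Gset d u).card := by
  have hinj : Function.Injective (fun v : List ℕ => v ++ [d]) := List.append_left_injective [d]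
  have := Finset.card_union_add_card_inter (Fset u) ((Gset d u).image (· ++ [d]))
  rw [← Fset_append, inter_eq_Eset, Finset.card_image_of_injective _ hinj] at this
  exact this

lemma card_Eset_append_self (d : ℕ) (u : List ℕ) :
    (Eset d (u ++ [d])).card = (Gset d u).card := by
  rw [Eset_append_self]
  exact Finset.card_image_of_injective _ (List.append_left_injective [d])

lemma Gset_one (u : List ℕ) : Gset 1 u = Fset u := by
  ext v
  simp only [Gset, Finset.mem_filter, head?_append_singleton]
  constructor
  · exact fun h => h.1
  · intro h
    refine ⟨h, ?_⟩
    rcases eq_or_ne v [] with rfl | hne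
    · simp
    · rw [if_neg hne]
      have := (mem_Fset.mp h).2
      simpa using this

lemma Gset_zero (u : List ℕ) : Gset 0 u = (Fset u).erase [] := by
  ext v
  simp only [Gset, Finset.mem_filter, Finset.mem_erase, head?_append_singleton]
  constructor
  · rintro ⟨hF, hh⟩
    refine ⟨?_, hF⟩
    rintro rfl
    simp at hh
  · rintro ⟨hne, hF⟩
    refine ⟨hF, ?_⟩
    rw [if_neg hne]
    have := (mem_Fset.mp hF).2
    simpa using this

lemma card_Gset_zero (u : List ℕ) : (Gset 0 u).card + 1 = (Fset u).card := by
  rw [Gset_zero]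
  exact Finset.card_erase_add_one (nil_mem_Fset u)

lemma card_partition (u : List ℕ) (hu : ∀ x ∈ u, x < 2) :
    (Fset u).card = 1 + (Eset 0 u).card + (Eset 1 u).card := by
  have hdisj : Disjoint (Eset 0 u) (Eset 1 u) := by
    rw [Finset.disjoint_left]
    intro w h0 h1
    have e0 := (Finset.mem_filter.mp h0).2
    have e1 := (Finset.mem_filter.mp h1).2
    rw [e0] at e1
    exact absurd (Option.some_injective _ e1) (by norm_num)
  have hnil : [] ∉ Eset 0 u ∪ Eset 1 u := by
    simp [Eset, Finset.mem_filter]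
  have hset : Fset u = insert [] (Eset 0 u ∪ Eset 1 u) := by
    ext w
    simp only [Finset.mem_insert, Finset.mem_union, Eset, Finset.mem_filter,
      decide_eq_true_eq]
    constructor
    · intro hw
      rcases eq_or_ne w [] with rfl | hne
      · exact Or.inl rfl
      · have hlast := List.getLast?_eq_getLast hne
        have hmem : w.getLast hne ∈ w := List.getLast_mem hne
        have : w.getLast hne ∈ u := (mem_Fset.mp hw).1.subset hmem
        have hlt := hu _ this
        have hcases : w.getLast hne = 0 ∨ w.getLast hne = 1 := by omega
        rcases hcases with h | h
        · exact Or.inr (Or.inl ⟨hw, by rw [hlast, h]⟩)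
        · exact Or.inr (Or.inr ⟨hw, by rw [hlast, h]⟩)
    · rintro (rfl | ⟨h, _⟩ | ⟨h, _⟩)
      · exact nil_mem_Fset u
      · exact h
      · exact h
  rw [hset, Finset.card_insert_of_notMem hnil, Finset.card_union_of_disjoint hdisj]
  ring

/-! Abbreviations -/

lemma key_one (u : List ℕ) :
    (Fset (u ++ [1])).card + (Eset 1 u).card = 2 * (Fset u).card := by
  have := card_Fset_append 1 u
  rw [Gset_one] at this
  omega

lemma key_zero (u : List ℕ) :
    (Fset (u ++ [0])).card + (Eset 0 u).card + 1 = 2 * (Fset u).card := by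
  have h1 := card_Fset_append 0 u
  have h2 := card_Gset_zero u
  omega

theorem stmt9 (n : ℕ) :
    ((Sb 2 (2 * n + 1) : ℤ) = 3 * Sb 2 n - Sb 2 (2 * n)) ∧
    ((Sb 2 (4 * n) : ℤ) = -(Sb 2 n : ℤ) + 2 * Sb 2 (2 * n)) ∧
    ((Sb 2 (4 * n + 2) : ℤ) = 4 * Sb 2 n - Sb 2 (2 * n)) := by
  rcases eq_or_ne n 0 with rfl | hn
  · have h0 : Sb 2 0 = 1 := by simp [Sb, Nat.digits_def']; decide
    have h1 : Sb 2 1 = 2 := by simp [Sb, Nat.digits_def']; decide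
    have h2 : Sb 2 2 = 3 := by
      rw [Sb, show Nat.digits 2 2 = [0, 1] by simp [Nat.digits_def']]; decide
    norm_num [h0, h1, h2]
  · set u : List ℕ := (Nat.digits 2 n).reverse with hu
    have hbin : ∀ x ∈ u, x < 2 := by
      intro x hx
      rw [hu, List.mem_reverse] at hx
      exact Nat.digits_lt_base (by norm_num) hx
    have hbin0 : ∀ x ∈ u ++ [0], x < 2 := by
      intro x hx
      rcases List.mem_append.mp hx with h | h
      · exact hbin x h
      · simp at h; omega
    have hbin1 : ∀ x ∈ u ++ [1], x < 2 := by
      intro x hx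
      rcases List.mem_append.mp hx with h | h
      · exact hbin x h
      · simp at h; omega
    -- digit expansions
    have hd2n : (Nat.digits 2 (2 * n)).reverse = u ++ [0] := by
      rw [Nat.digits_def' (by norm_num : 1 < 2) (by omega : 0 < 2 * n)]
      simp [hu, Nat.mul_div_cancel_left n (by norm_num : 0 < 2), Nat.mul_mod_right]
    have hd2n1 : (Nat.digits 2 (2 * n + 1)).reverse = u ++ [1] := by
      rw [Nat.digits_def' (by norm_num : 1 < 2) (by omega : 0 < 2 * n + 1)]
      have h1 : (2 * n + 1) % 2 = 1 := by omega
      have h2 : (2 * n + 1) / 2 = n := by omega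
      simp [hu, h1, h2]
    have hd4n : (Nat.digits 2 (4 * n)).reverse = u ++ [0] ++ [0] := by
      rw [show 4 * n = 2 * (2 * n) by ring,
        Nat.digits_def' (by norm_num : 1 < 2) (by omega : 0 < 2 * (2 * n))]
      have h1 : 2 * (2 * n) % 2 = 0 := by omega
      have h2 : 2 * (2 * n) / 2 = 2 * n := by omega
      rw [h1, h2]
      simp only [List.reverse_cons, hd2n]
    have hd4n2 : (Nat.digits 2 (4 * n + 2)).reverse = u ++ [1] ++ [0] := by
      rw [show 4 * n + 2 = 2 * (2 * n + 1) by ring,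
        Nat.digits_def' (by norm_num : 1 < 2) (by omega : 0 < 2 * (2 * n + 1))]
      have h1 : 2 * (2 * n + 1) % 2 = 0 := by omega
      have h2 : 2 * (2 * n + 1) / 2 = 2 * n + 1 := by omega
      rw [h1, h2]
      simp only [List.reverse_cons, hd2n1]
    -- rewrite Sb values
    have sn : Sb 2 n = (Fset u).card := by rw [Sb, lbCount_eq_card, hu]
    have s2n : Sb 2 (2 * n) = (Fset (u ++ [0])).card := by
      rw [Sb, lbCount_eq_card, hd2n]
    have s2n1 : Sb 2 (2 * n + 1) = (Fset (u ++ [1])).card := by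
      rw [Sb, lbCount_eq_card, hd2n1]
    have s4n : Sb 2 (4 * n) = (Fset (u ++ [0] ++ [0])).card := by
      rw [Sb, lbCount_eq_card, hd4n]
    have s4n2 : Sb 2 (4 * n + 2) = (Fset (u ++ [1] ++ [0])).card := by
      rw [Sb, lbCount_eq_card, hd4n2]
    -- key equations
    have k1 := key_one u
    have k0 := key_zero u
    have k00 := key_zero (u ++ [0])
    have k10 := key_zero (u ++ [1])
    have p := card_partition u hbin
    have p0 := card_partition (u ++ [0]) hbin0
    have p1 := card_partition (u ++ [1]) hbin1
    have e00 : (Eset 0 (u ++ [0])).card + 1 = (Fset u).card := by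
      rw [card_Eset_append_self]
      exact card_Gset_zero u
    have e10 : (Eset 1 (u ++ [0])).card = (Eset 1 u).card := by
      rw [Eset_append_ne (by norm_num)]
    have e11 : (Eset 1 (u ++ [1])).card = (Fset u).card := by
      rw [card_Eset_append_self, Gset_one]
    have e01 : (Eset 0 (u ++ [1])).card = (Eset 0 u).card := by
      rw [Eset_append_ne (by norm_num)]
    refine ⟨?_, ?_, ?_⟩ <;> omega
end
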